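/- (MSE formula) Under the setup above, MSE(r̂_n) = E(r̂_n − μ_Y)² = f(0)^{-2} [E(Y₀²) Var(f̂_n(0)) + (E V_{n,1})² Var(Ȳ_n) + μ_Y² (Bias f̂_n(0))²], where Bias f̂_n(0) = E f̂_n(0) − f(0). -/

import Mathlib

open MeasureTheory ProbabilityTheory Filter

/-- MSE formula: with `V_{n,i} = h⁻¹ K(X_i/h)`, `f̂_n(0) = (1/n) Σ V_{n,i}` and
`r̂_n = (f 0)⁻¹ (1/n) Σ Y_i V_{n,i}`,
`MSE(r̂_n) = E(r̂_n − μ_Y)² = (f 0)⁻² [E(Y₀²) Var(f̂_n(0)) + (E V_{n,1})² Var(Ȳ_n)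
  + μ_Y² (Bias f̂_n(0))²]`, where `Bias f̂_n(0) = E f̂_n(0) − f 0`. -/
theorem mse_formula
    {Ω : Type*} [MeasurableSpace Ω] (P : Measure Ω) [IsProbabilityMeasure P]
    (T : Ω → Ω) (hT : MeasurePreserving T P P)
    (Y : Ω → ℝ) (hY_meas : Measurable Y) (hY2 : MemLp Y 2 P)
    (μY : ℝ) (hμY : μY = ∫ ω, Y ω ∂P)
    (X : ℕ → Ω → ℝ) (hX_meas : ∀ i, Measurable (X i))
    (hX_indep : iIndepFun X P)
    (hX_ident : ∀ i, IdentDistrib (X i) (X 0) P P)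
    (hXY_indep : Indep
      (⨆ i : ℕ, MeasurableSpace.comap (fun ω => Y (T^[i] ω)) (inferInstance : MeasurableSpace ℝ))
      (⨆ i : ℕ, MeasurableSpace.comap (X i) (inferInstance : MeasurableSpace ℝ)) P)
    (f K : ℝ → ℝ)
    (hf_nonneg : ∀ x, 0 ≤ f x) (hf_bdd : ∃ M, ∀ x, f x ≤ M)
    (hf_int : Integrable f) (hf_one : ∫ x, f x = 1) (hf0 : f 0 ≠ 0)
    (hf_density : P.map (X 0) = volume.withDensity (fun x => ENNReal.ofReal (f x)))
    (hK_meas : Measurable K)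
    (hK_nonneg : ∀ x, 0 ≤ K x) (hK_bdd : ∃ M, ∀ x, K x ≤ M)
    (hK_int : Integrable K) (hK_one : ∫ x, K x = 1)
    (h : ℝ) (h_pos : 0 < h)
    (n : ℕ) (hn : 0 < n)
    (V : ℕ → Ω → ℝ) (hV : ∀ i, V i = fun ω => h⁻¹ * K (X i ω / h))
    (fhat : Ω → ℝ) (hfhat : fhat = fun ω => (1 / (n : ℝ)) * ∑ i ∈ Finset.range n, V i ω)
    (rhat : Ω → ℝ)
    (hrhat : rhat = fun ω => (f 0)⁻¹ * ((1 / (n : ℝ)) * ∑ i ∈ Finset.range n, Y (T^[i] ω) * V i ω)) :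
    ∫ ω, (rhat ω - μY) ^ 2 ∂P
      = (f 0)⁻¹ ^ 2 *
          ((∫ ω, (Y ω) ^ 2 ∂P) * variance fhat P
            + (∫ ω, V 0 ω ∂P) ^ 2 *
              variance (fun ω => (1 / (n : ℝ)) * ∑ i ∈ Finset.range n, Y (T^[i] ω)) P
            + μY ^ 2 * ((∫ ω, fhat ω ∂P) - f 0) ^ 2) := by
  classical
  obtain ⟨M, hM⟩ := hK_bdd
  have hn0 : (n : ℝ) ≠ 0 := Nat.cast_ne_zero.2 hn.ne'
  -- the rescaled kernel
  set g : ℝ → ℝ := fun x => h⁻¹ * K (x / h) with hg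
  have hg_meas : Measurable g := (hK_meas.comp (measurable_id.div_const h)).const_mul h⁻¹
  have hg_bound : ∀ x, ‖g x‖ ≤ h⁻¹ * M := by
    intro x
    rw [Real.norm_of_nonneg (mul_nonneg (inv_nonneg.2 h_pos.le) (hK_nonneg _))]
    exact mul_le_mul_of_nonneg_left (hM _) (inv_nonneg.2 h_pos.le)
  have hVg : ∀ i, V i = g ∘ X i := fun i => by rw [hV i]; rfl
  have hV_meas : ∀ i, Measurable (V i) := fun i => by rw [hVg]; exact hg_meas.comp (hX_meas i)
  have hV_bdd : ∀ i, ∀ ω, ‖V i ω‖ ≤ h⁻¹ * M := fun i ω => by rw [hVg]; exact hg_bound _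
  have hV_top : ∀ i, MemLp (V i) ⊤ P := fun i =>
    memLp_top_of_bound (hV_meas i).aestronglyMeasurable _ (Filter.Eventually.of_forall (hV_bdd i))
  have hV_int : ∀ i, Integrable (V i) P := fun i => (hV_top i).integrable le_top
  have hV2 : ∀ i, MemLp (V i) 2 P := fun i => (hV_top i).mono_exponent le_top
  -- stationarity
  have hTi : ∀ i, MeasurePreserving T^[i] P P := fun i => hT.iterate i
  have hYi_meas : ∀ i, Measurable (fun ω => Y (T^[i] ω)) := fun i => hY_meas.comp (hTi i).measurable
  have hYi2 : ∀ i, MemLp (fun ω => Y (T^[i] ω)) 2 P := fun i => hY2.comp_measurePreserving (hTi i)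
  have hstat : ∀ (G : Ω → ℝ), AEStronglyMeasurable G P → ∀ i,
      ∫ ω, G (T^[i] ω) ∂P = ∫ ω, G ω ∂P := by
    intro G hG i
    rw [← integral_map (hTi i).measurable.aemeasurable (by rwa [(hTi i).map_eq]), (hTi i).map_eq]
  have hEYi : ∀ i, ∫ ω, Y (T^[i] ω) ∂P = μY := fun i => by
    rw [hμY]; exact hstat Y hY_meas.aestronglyMeasurable i
  set q : ℝ := ∫ ω, Y ω ^ 2 ∂P with hq
  have hEYii : ∀ i, ∫ ω, Y (T^[i] ω) * Y (T^[i] ω) ∂P = q := by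
    intro i
    have h2 := hstat (fun ω => Y ω * Y ω) (hY_meas.mul hY_meas).aestronglyMeasurable i
    rw [hq]
    simp only [pow_two]
    exact h2
  -- identical distribution of the V i
  have hVid : ∀ i, IdentDistrib (V i) (V 0) P P := fun i => by
    rw [hVg i, hVg 0]; exact (hX_ident i).comp hg_meas
  set v : ℝ := ∫ ω, V 0 ω ∂P with hv
  set w : ℝ := ∫ ω, V 0 ω * V 0 ω ∂P with hw
  have hEVi : ∀ i, ∫ ω, V i ω ∂P = v := fun i => (hVid i).integral_eq
  have hEVii : ∀ i, ∫ ω, V i ω * V i ω ∂P = w := fun i =>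
    ((hVid i).comp (measurable_id.mul measurable_id)).integral_eq
  have hEVij : ∀ i j, ∫ ω, V i ω * V j ω ∂P = if i = j then w else v * v := by
    intro i j
    by_cases hij : i = j
    · subst hij; simp only [if_pos rfl]; exact hEVii i
    · have h1 : IndepFun (V i) (V j) P := by
        rw [hVg i, hVg j]; exact (hX_indep.indepFun hij).comp hg_meas hg_meas
      have h2 := h1.integral_mul_eq_mul_integral (hV_meas i).aestronglyMeasurable (hV_meas j).aestronglyMeasurable
      rw [if_neg hij]
      exact Eq.trans h2 (by rw [show integral P (V i) = v from hEVi i,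
        show integral P (V j) = v from hEVi j])
  -- cross independence of Y-side and X-side functions
  have hmY : ∀ i, Measurable[⨆ i : ℕ, MeasurableSpace.comap (fun ω => Y (T^[i] ω))
      (inferInstance : MeasurableSpace ℝ)] (fun ω => Y (T^[i] ω)) := fun i =>
    measurable_iff_comap_le.2 (le_iSup (fun i => MeasurableSpace.comap (fun ω => Y (T^[i] ω))
      (inferInstance : MeasurableSpace ℝ)) i)
  have hmX : ∀ i, Measurable[⨆ i : ℕ, MeasurableSpace.comap (X i)
      (inferInstance : MeasurableSpace ℝ)] (V i) := fun i => by
    rw [hVg i]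
    exact hg_meas.comp (measurable_iff_comap_le.2 (le_iSup (fun i => MeasurableSpace.comap (X i)
      (inferInstance : MeasurableSpace ℝ)) i))
  have hIndep : ∀ (F G : Ω → ℝ),
      Measurable[⨆ i : ℕ, MeasurableSpace.comap (fun ω => Y (T^[i] ω))
        (inferInstance : MeasurableSpace ℝ)] F →
      Measurable[⨆ i : ℕ, MeasurableSpace.comap (X i) (inferInstance : MeasurableSpace ℝ)] G →
      IndepFun F G P := fun F G hF hG =>
    indep_of_indep_of_le_left (indep_of_indep_of_le_right hXY_indep
      (measurable_iff_comap_le.1 hG)) (measurable_iff_comap_le.1 hF)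
  -- integrability of products
  have hYY_int : ∀ i j, Integrable (fun ω => Y (T^[i] ω) * Y (T^[j] ω)) P := fun i j =>
    memLp_one_iff_integrable.1 ((hYi2 j).smul (φ := fun ω => Y (T^[i] ω)) (hYi2 i) (r := 1))
  have hVV_bound : ∀ i j, ∀ ω, ‖V i ω * V j ω‖ ≤ h⁻¹ * M * (h⁻¹ * M) := by
    intro i j ω
    calc ‖V i ω * V j ω‖ = ‖V i ω‖ * ‖V j ω‖ := norm_mul _ _
    _ ≤ h⁻¹ * M * (h⁻¹ * M) :=
      mul_le_mul (hV_bdd i ω) (hV_bdd j ω) (norm_nonneg _) ((norm_nonneg _).trans (hV_bdd i ω))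
  have hYYVV_int : ∀ i j,
      Integrable (fun ω => Y (T^[i] ω) * Y (T^[j] ω) * (V i ω * V j ω)) P := by
    intro i j
    have h1 : Integrable (fun ω => (V i ω * V j ω) * (Y (T^[i] ω) * Y (T^[j] ω))) P :=
      (hYY_int i j).bdd_mul (((hV_meas i).mul (hV_meas j)).aestronglyMeasurable)
        (Filter.Eventually.of_forall (hVV_bound i j))
    exact h1.congr (Filter.Eventually.of_forall fun ω => mul_comm _ _)
  have hYV_int : ∀ i, Integrable (fun ω => Y (T^[i] ω) * V i ω) P := by
    intro i
    have h1 : Integrable (fun ω => V i ω * Y (T^[i] ω)) P :=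
      ((hYi2 i).integrable one_le_two).bdd_mul (hV_meas i).aestronglyMeasurable
        (Filter.Eventually.of_forall (hV_bdd i))
    exact h1.congr (Filter.Eventually.of_forall fun ω => mul_comm _ _)
  have hVV_int : ∀ i j, Integrable (fun ω => V i ω * V j ω) P := fun i j =>
    (hV_int j).bdd_mul (hV_meas i).aestronglyMeasurable
      (Filter.Eventually.of_forall (hV_bdd i))
  -- factorization of the key expectations
  have hsplit : ∀ i j, ∫ ω, Y (T^[i] ω) * Y (T^[j] ω) * (V i ω * V j ω) ∂P
      = (∫ ω, Y (T^[i] ω) * Y (T^[j] ω) ∂P) * (if i = j then w else v * v) := by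
    intro i j
    have hind := hIndep (fun ω => Y (T^[i] ω) * Y (T^[j] ω)) (fun ω => V i ω * V j ω)
      ((hmY i).mul (hmY j)) ((hmX i).mul (hmX j))
    have h2 := hind.integral_mul_eq_mul_integral ((hYi_meas i).mul (hYi_meas j)).aestronglyMeasurable
      (((hV_meas i).mul (hV_meas j)).aestronglyMeasurable)
    exact Eq.trans h2 (by rw [hEVij i j])
  have hYVsplit : ∀ i, ∫ ω, Y (T^[i] ω) * V i ω ∂P = μY * v := by
    intro i
    have hind := hIndep (fun ω => Y (T^[i] ω)) (V i) (hmY i) (hmX i)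
    have h2 := hind.integral_mul_eq_mul_integral (hYi_meas i).aestronglyMeasurable
      (hV_meas i).aestronglyMeasurable
    exact Eq.trans h2 (by rw [hEYi i, show integral P (V i) = v from hEVi i])
  -- generic expansion of the square of an average
  have hsq_expand : ∀ (Z : ℕ → Ω → ℝ), (∀ i j, Integrable (fun ω => Z i ω * Z j ω) P) →
      ∫ ω, ((1 / (n : ℝ)) * ∑ i ∈ Finset.range n, Z i ω) ^ 2 ∂P
        = (1 / (n : ℝ)) ^ 2 * ∑ i ∈ Finset.range n, ∑ j ∈ Finset.range n,
            ∫ ω, Z i ω * Z j ω ∂P := by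
    intro Z hZ
    have h1 : ∀ ω, ((1 / (n : ℝ)) * ∑ i ∈ Finset.range n, Z i ω) ^ 2
        = (1 / (n : ℝ)) ^ 2 * ∑ i ∈ Finset.range n, ∑ j ∈ Finset.range n, Z i ω * Z j ω := by
      intro ω
      rw [mul_pow, sq (∑ i ∈ Finset.range n, Z i ω), Finset.sum_mul_sum]
    simp_rw [h1]
    rw [integral_const_mul, integral_finset_sum _
      (fun i _ => integrable_finset_sum _ (fun j _ => hZ i j))]
    congr 1
    exact Finset.sum_congr rfl fun i _ => integral_finset_sum _ fun j _ => hZ i j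
  -- generic average integral
  have havg : ∀ (Z : ℕ → Ω → ℝ), (∀ i, Integrable (Z i) P) →
      ∫ ω, (1 / (n : ℝ)) * ∑ i ∈ Finset.range n, Z i ω ∂P
        = (1 / (n : ℝ)) * ∑ i ∈ Finset.range n, ∫ ω, Z i ω ∂P := by
    intro Z hZ
    rw [integral_const_mul, integral_finset_sum _ (fun i _ => hZ i)]
  -- double sums with the `ite` weights
  have hgen : ∀ (t : ℕ → ℕ → ℝ),
      ∑ i ∈ Finset.range n, ∑ j ∈ Finset.range n, t i j * (if i = j then w else v * v)
        = (v * v) * (∑ i ∈ Finset.range n, ∑ j ∈ Finset.range n, t i j)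
          + (∑ i ∈ Finset.range n, t i i) * (w - v * v) := by
    intro t
    have h1 : ∀ i j, t i j * (if i = j then w else v * v)
        = t i j * (v * v) + (if i = j then t i j * (w - v * v) else 0) := by
      intro i j
      by_cases hij : i = j <;> simp [hij] <;> ring
    simp_rw [h1, Finset.sum_add_distrib, Finset.sum_ite_eq]
    congr 1
    · rw [Finset.mul_sum]
      exact Finset.sum_congr rfl fun i _ => by
        rw [Finset.mul_sum]
        exact Finset.sum_congr rfl fun j _ => mul_comm _ _
    · rw [Finset.sum_mul]
      exact Finset.sum_congr rfl fun i hi => if_pos hi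
  -- abbreviation for the double sum of Y-covariances
  set S : ℝ := ∑ i ∈ Finset.range n, ∑ j ∈ Finset.range n,
    ∫ ω, Y (T^[i] ω) * Y (T^[j] ω) ∂P with hS
  have hSdiag : ∑ i ∈ Finset.range n, ∫ ω, Y (T^[i] ω) * Y (T^[i] ω) ∂P = (n : ℝ) * q := by
    simp only [hEYii]
    rw [Finset.sum_const, Finset.card_range, nsmul_eq_mul]
  -- the expectation of fhat
  have hEfhat : ∫ ω, fhat ω ∂P = v := by
    rw [hfhat, havg V hV_int]
    simp only [hEVi]
    rw [Finset.sum_const, Finset.card_range, nsmul_eq_mul]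
    field_simp
  -- MemLp facts for variance
  have hfhat2mem : MemLp fhat 2 P := by
    rw [hfhat]
    exact (memLp_finset_sum _ fun i _ => hV2 i).const_mul _
  have hYbar2mem : MemLp (fun ω => (1 / (n : ℝ)) * ∑ i ∈ Finset.range n, Y (T^[i] ω)) 2 P :=
    (memLp_finset_sum _ fun i _ => hYi2 i).const_mul _
  -- variance of fhat
  have hVarfhat : variance fhat P
      = (1 / (n : ℝ)) ^ 2 * ((v * v) * ((n : ℝ) * (n : ℝ)) + (n : ℝ) * (w - v * v)) - v ^ 2 := by
    rw [variance_eq_sub hfhat2mem, hEfhat]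
    congr 1
    have h2 : ∫ ω, fhat ω ^ 2 ∂P
        = (1 / (n : ℝ)) ^ 2 * ∑ i ∈ Finset.range n, ∑ j ∈ Finset.range n,
            ∫ ω, V i ω * V j ω ∂P := by
      rw [hfhat]; exact hsq_expand V hVV_int
    have h3 : ∑ i ∈ Finset.range n, ∑ j ∈ Finset.range n, ∫ ω, V i ω * V j ω ∂P
        = (v * v) * ((n : ℝ) * (n : ℝ)) + (n : ℝ) * (w - v * v) := by
      have h4 := hgen (fun _ _ => (1 : ℝ))
      simp only [one_mul] at h4
      simp only [hEVij]
      rw [h4]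
      simp only [Finset.sum_const, Finset.card_range, nsmul_eq_mul, mul_one]
    calc (∫ ω, (fhat ^ 2) ω ∂P) = ∫ ω, fhat ω ^ 2 ∂P := by simp only [Pi.pow_apply]
    _ = (1 / (n : ℝ)) ^ 2 * ((v * v) * ((n : ℝ) * (n : ℝ)) + (n : ℝ) * (w - v * v)) := by
        rw [h2, h3]
  -- variance of the Y-average
  have hEYbar : ∫ ω, (1 / (n : ℝ)) * ∑ i ∈ Finset.range n, Y (T^[i] ω) ∂P = μY := by
    rw [havg _ (fun i => (hYi2 i).integrable one_le_two)]
    simp only [hEYi]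
    rw [Finset.sum_const, Finset.card_range, nsmul_eq_mul]
    field_simp
  have hVarYbar : variance (fun ω => (1 / (n : ℝ)) * ∑ i ∈ Finset.range n, Y (T^[i] ω)) P
      = (1 / (n : ℝ)) ^ 2 * S - μY ^ 2 := by
    rw [variance_eq_sub hYbar2mem, hEYbar]
    congr 1
    calc (∫ ω, ((fun ω => (1 / (n : ℝ)) * ∑ i ∈ Finset.range n, Y (T^[i] ω)) ^ 2) ω ∂P)
        = ∫ ω, ((1 / (n : ℝ)) * ∑ i ∈ Finset.range n, Y (T^[i] ω)) ^ 2 ∂P := by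
          simp only [Pi.pow_apply]
    _ = (1 / (n : ℝ)) ^ 2 * S := by rw [hsq_expand _ hYY_int]
  -- the left-hand side
  have hWW_int : ∀ i j,
      Integrable (fun ω => Y (T^[i] ω) * V i ω * (Y (T^[j] ω) * V j ω)) P := fun i j =>
    (hYYVV_int i j).congr (Filter.Eventually.of_forall fun ω => by ring)
  have hWWsplit : ∀ i j, ∫ ω, Y (T^[i] ω) * V i ω * (Y (T^[j] ω) * V j ω) ∂P
      = (∫ ω, Y (T^[i] ω) * Y (T^[j] ω) ∂P) * (if i = j then w else v * v) := by
    intro i j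
    have h1 : (fun ω => Y (T^[i] ω) * V i ω * (Y (T^[j] ω) * V j ω))
        = fun ω => Y (T^[i] ω) * Y (T^[j] ω) * (V i ω * V j ω) := funext fun ω => by ring
    rw [h1, hsplit i j]
  have hA_int : Integrable (fun ω => (1 / (n : ℝ)) * ∑ i ∈ Finset.range n,
      Y (T^[i] ω) * V i ω) P :=
    (integrable_finset_sum _ fun i _ => hYV_int i).const_mul _
  have hA2_int : Integrable (fun ω => ((1 / (n : ℝ)) * ∑ i ∈ Finset.range n,
      Y (T^[i] ω) * V i ω) ^ 2) P := by
    have h1 : (fun ω => ((1 / (n : ℝ)) * ∑ i ∈ Finset.range n, Y (T^[i] ω) * V i ω) ^ 2)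
        = fun ω => (1 / (n : ℝ)) ^ 2 * ∑ i ∈ Finset.range n, ∑ j ∈ Finset.range n,
            Y (T^[i] ω) * V i ω * (Y (T^[j] ω) * V j ω) := by
      funext ω
      rw [mul_pow, sq (∑ i ∈ Finset.range n, Y (T^[i] ω) * V i ω), Finset.sum_mul_sum]
    rw [h1]
    exact (integrable_finset_sum _ fun i _ =>
      integrable_finset_sum _ fun j _ => hWW_int i j).const_mul _
  have hEA : ∫ ω, (1 / (n : ℝ)) * ∑ i ∈ Finset.range n, Y (T^[i] ω) * V i ω ∂P = μY * v := by
    rw [havg _ hYV_int]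
    simp only [hYVsplit]
    rw [Finset.sum_const, Finset.card_range, nsmul_eq_mul]
    field_simp
  have hEA2 : ∫ ω, ((1 / (n : ℝ)) * ∑ i ∈ Finset.range n, Y (T^[i] ω) * V i ω) ^ 2 ∂P
      = (1 / (n : ℝ)) ^ 2 * ((v * v) * S + ((n : ℝ) * q) * (w - v * v)) := by
    rw [hsq_expand _ hWW_int]
    congr 1
    calc (∑ i ∈ Finset.range n, ∑ j ∈ Finset.range n,
          ∫ ω, Y (T^[i] ω) * V i ω * (Y (T^[j] ω) * V j ω) ∂P)
        = ∑ i ∈ Finset.range n, ∑ j ∈ Finset.range n,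
            (∫ ω, Y (T^[i] ω) * Y (T^[j] ω) ∂P) * (if i = j then w else v * v) :=
          Finset.sum_congr rfl fun i _ => Finset.sum_congr rfl fun j _ => hWWsplit i j
    _ = (v * v) * S + ((n : ℝ) * q) * (w - v * v) := by
          rw [hgen (fun i j => ∫ ω, Y (T^[i] ω) * Y (T^[j] ω) ∂P), hSdiag]
  have hLHS : ∫ ω, (rhat ω - μY) ^ 2 ∂P
      = (f 0)⁻¹ ^ 2 * ((1 / (n : ℝ)) ^ 2 * ((v * v) * S + ((n : ℝ) * q) * (w - v * v)))
        - (2 * μY * (f 0)⁻¹) * (μY * v) + μY ^ 2 := by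
    have hpt : ∀ ω, (rhat ω - μY) ^ 2
        = (f 0)⁻¹ ^ 2 * ((1 / (n : ℝ)) * ∑ i ∈ Finset.range n, Y (T^[i] ω) * V i ω) ^ 2
          - (2 * μY * (f 0)⁻¹) * ((1 / (n : ℝ)) * ∑ i ∈ Finset.range n, Y (T^[i] ω) * V i ω)
          + μY ^ 2 := by
      intro ω
      rw [hrhat]
      ring
    simp_rw [hpt]
    have hI1 : Integrable (fun ω => (f 0)⁻¹ ^ 2
        * ((1 / (n : ℝ)) * ∑ i ∈ Finset.range n, Y (T^[i] ω) * V i ω) ^ 2) P :=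
      hA2_int.const_mul _
    have hI2 : Integrable (fun ω => (2 * μY * (f 0)⁻¹)
        * ((1 / (n : ℝ)) * ∑ i ∈ Finset.range n, Y (T^[i] ω) * V i ω)) P :=
      hA_int.const_mul _
    have hI12 : Integrable (fun ω => (f 0)⁻¹ ^ 2
        * ((1 / (n : ℝ)) * ∑ i ∈ Finset.range n, Y (T^[i] ω) * V i ω) ^ 2
        - (2 * μY * (f 0)⁻¹) * ((1 / (n : ℝ)) * ∑ i ∈ Finset.range n, Y (T^[i] ω) * V i ω)) P :=
      hI1.sub hI2
    rw [integral_add hI12 (integrable_const _), integral_sub hI1 hI2,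
      integral_const_mul, integral_const_mul, hEA2, hEA, integral_const]
    simp [measure_univ]
  -- final algebra
  rw [hLHS, hVarfhat, hVarYbar, hEfhat]
  field_simp
  ring
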